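/- If lm(h) divides lcm(lm(f), lm(g)) for nonzero polynomials f, g, h, then there exist monomials u and v such that S(f,g) = u·S(f,h) + v·S(h,g). -/
import Mathlib


open MvPolynomial
open scoped MonomialOrder

namespace GB

variable {σ K : Type*} [Field K]

/-- The leading monomial (exponent vector) of `p` with respect to the monomial order `m`. -/
noncomputable def lm (m : MonomialOrder σ) (p : MvPolynomial σ K) : σ →₀ ℕ :=
  m.toSyn.symm (p.support.sup m.toSyn)

/-- The leading coefficient of `p` with respect to `m`. -/
noncomputable def lc (m : MonomialOrder σ) (p : MvPolynomial σ K) : K :=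
  p.coeff (lm m p)

/-- The leading term of `p` with respect to `m`. -/
noncomputable def lt (m : MonomialOrder σ) (p : MvPolynomial σ K) : MvPolynomial σ K :=
  monomial (lm m p) (lc m p)

/-- The (monic) least common multiple of two monomials, as pointwise sup of exponents. -/
noncomputable def mlcm (a b : σ →₀ ℕ) : σ →₀ ℕ := a ⊔ b

/-- The S-polynomial `S(f,g) = (λ/lt f)·f − (λ/lt g)·g` where `λ = lcm(lm f, lm g)`. -/
noncomputable def sPoly (m : MonomialOrder σ) (f g : MvPolynomial σ K) : MvPolynomial σ K :=
  monomial (mlcm (lm m f) (lm m g) - lm m f) (lc m f)⁻¹ * f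
    - monomial (mlcm (lm m f) (lm m g) - lm m g) (lc m g)⁻¹ * g

/-- If `lm h` divides `lcm(lm f, lm g)` then there are monomials `u, v` (exponent plus nonzero
coefficient) with `S(f,g) = u·S(f,h) + v·S(h,g)`. -/
theorem chain_decomposition (m : MonomialOrder σ) (f g h : MvPolynomial σ K)
    (hf : f ≠ 0) (hg : g ≠ 0) (hh : h ≠ 0)
    (hdvd : lm m h ≤ mlcm (lm m f) (lm m g)) :
    ∃ (u v : σ →₀ ℕ) (cu cv : K), cu ≠ 0 ∧ cv ≠ 0 ∧
      sPoly m f g =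
        monomial u cu * sPoly m f h + monomial v cv * sPoly m h g := by
  classical
  set a := lm m f with ha
  set b := lm m g with hb
  set c := lm m h with hc
  have hac : mlcm a c ≤ mlcm a b := sup_le le_sup_left hdvd
  have hcb : mlcm c b ≤ mlcm a b := sup_le hdvd le_sup_right
  refine ⟨mlcm a b - mlcm a c, mlcm a b - mlcm c b, 1, 1, one_ne_zero, one_ne_zero, ?_⟩
  have e1 : (mlcm a b - mlcm a c) + (mlcm a c - a) = mlcm a b - a :=
    tsub_add_tsub_cancel hac le_sup_left
  have e2 : (mlcm a b - mlcm a c) + (mlcm a c - c) = mlcm a b - c :=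
    tsub_add_tsub_cancel hac le_sup_right
  have e3 : (mlcm a b - mlcm c b) + (mlcm c b - c) = mlcm a b - c :=
    tsub_add_tsub_cancel hcb le_sup_left
  have e4 : (mlcm a b - mlcm c b) + (mlcm c b - b) = mlcm a b - b :=
    tsub_add_tsub_cancel hcb le_sup_right
  unfold sPoly
  rw [← ha, ← hb, ← hc]
  rw [mul_sub, mul_sub, ← mul_assoc, ← mul_assoc, ← mul_assoc, ← mul_assoc,
    monomial_mul, monomial_mul, monomial_mul, monomial_mul,
    e1, e2, e3, e4]
  ring

end GB
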